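/- Consider a stochastic block model with parameters satisfying n_k ∈ [n/(βK), βn/K], p* = max_{k,ℓ} P_{kℓ} ≤ 1−ε, max P / min P ≤ ω, and K ≤ K*, with p_{kj} = P_{k z_j}. Fix distinct communities k ≠ ℓ, let α* = argmax_{α∈(0,1)} D_α(p_{k*}‖p_{ℓ*}) for the product Bernoulli distributions with parameters p_{k*} and p_{ℓ*}, and let n σ̄ₙ² = ∑_{j=1}^n [ log( p_{kj}(1−p_{ℓj}) / (p_{ℓj}(1−p_{kj})) ) ]² p_{α*j}(1−p_{α*j}), where p_{αj} = p_{kj}^{1−α} p_{ℓj}^α / ( p_{kj}^{1−α} p_{ℓj}^α + (1−p_{kj})^{1−α}(1−p_{ℓj})^α ). Then for any C₁ > 0 there exists C₂ > 0 depending only on β, ε, K*, ω such that if n p* ≤ C₂ · ( D*(p_{k*}‖p_{ℓ*}) )², then √n σ̄ₙ α*(1−α*) ≥ C₁. -/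

import Mathlib

open Finset

/-- Chernoff information `D*(p‖q)` of two product Bernoulli distributions. -/
noncomputable def chernoffBern {n : ℕ} (p q : Fin n → ℝ) : ℝ :=
  sSup ((fun α : ℝ => ∑ j, -Real.log (p j ^ (1 - α) * q j ^ α +
      (1 - p j) ^ (1 - α) * (1 - q j) ^ α)) '' Set.Ioo 0 1)

/-- The tilted Bernoulli parameter `p_{αj}`. -/
noncomputable def tiltedBern (α pk pl : ℝ) : ℝ :=
  pk ^ (1 - α) * pl ^ α / (pk ^ (1 - α) * pl ^ α + (1 - pk) ^ (1 - α) * (1 - pl) ^ α)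


noncomputable def gF (P1 P2 u v α : ℝ) : ℝ := P1 * Real.exp (α * u) + P2 * Real.exp (α * v)
noncomputable def gD (P1 P2 u v α : ℝ) : ℝ :=
  (P1 * u * Real.exp (α * u) + P2 * v * Real.exp (α * v)) / gF P1 P2 u v α
noncomputable def gH (P1 P2 u v α : ℝ) : ℝ :=
  (u - v) ^ 2 * (P1 * Real.exp (α * u)) * (P2 * Real.exp (α * v)) / (gF P1 P2 u v α) ^ 2

lemma gF_pos {P1 P2 : ℝ} (h1 : 0 < P1) (h2 : 0 < P2) (u v α : ℝ) : 0 < gF P1 P2 u v α := by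
  unfold gF; positivity

lemma hasDerivAt_gF (P1 P2 u v α : ℝ) :
    HasDerivAt (fun x => gF P1 P2 u v x) (P1 * u * Real.exp (α * u) + P2 * v * Real.exp (α * v)) α := by
  have h1 : HasDerivAt (fun x : ℝ => P1 * Real.exp (x * u)) (P1 * (Real.exp (α * u) * u)) α :=
    ((hasDerivAt_mul_const u).exp).const_mul P1
  have h2 : HasDerivAt (fun x : ℝ => P2 * Real.exp (x * v)) (P2 * (Real.exp (α * v) * v)) α :=
    ((hasDerivAt_mul_const v).exp).const_mul P2
  have := h1.add h2
  refine this.congr_deriv ?_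
  ring

lemma hasDerivAt_log_gF {P1 P2 : ℝ} (h1 : 0 < P1) (h2 : 0 < P2) (u v α : ℝ) :
    HasDerivAt (fun x => Real.log (gF P1 P2 u v x)) (gD P1 P2 u v α) α :=
  (hasDerivAt_gF P1 P2 u v α).log (gF_pos h1 h2 u v α).ne'

lemma hasDerivAt_gD {P1 P2 : ℝ} (h1 : 0 < P1) (h2 : 0 < P2) (u v α : ℝ) :
    HasDerivAt (fun x => gD P1 P2 u v x) (gH P1 P2 u v α) α := by
  have hn : HasDerivAt (fun x : ℝ => P1 * u * Real.exp (x * u) + P2 * v * Real.exp (x * v))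
      (P1 * u * (Real.exp (α * u) * u) + P2 * v * (Real.exp (α * v) * v)) α :=
    (((hasDerivAt_mul_const u).exp).const_mul (P1 * u)).add
      (((hasDerivAt_mul_const v).exp).const_mul (P2 * v))
  have hd := hasDerivAt_gF P1 P2 u v α
  have hne := (gF_pos h1 h2 u v α).ne'
  have := hn.div hd hne
  refine this.congr_deriv ?_
  unfold gH gF
  rw [div_eq_div_iff (by positivity) (by positivity)]
  ring



lemma rpow_mul_eq {p q : ℝ} (hp : 0 < p) (hq : 0 < q) (α : ℝ) :
    p ^ (1 - α) * q ^ α = p * Real.exp (α * (Real.log q - Real.log p)) := by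
  rw [Real.rpow_def_of_pos hp, Real.rpow_def_of_pos hq, ← Real.exp_add,
    show p * Real.exp (α * (Real.log q - Real.log p)) =
      Real.exp (Real.log p + α * (Real.log q - Real.log p)) by
        rw [Real.exp_add, Real.exp_log hp]]
  congr 1
  ring

lemma E_eq_gF {p q : ℝ} (hp0 : 0 < p) (hp1 : p < 1) (hq0 : 0 < q) (hq1 : q < 1) (α : ℝ) :
    p ^ (1 - α) * q ^ α + (1 - p) ^ (1 - α) * (1 - q) ^ α =
      gF p (1 - p) (Real.log q - Real.log p) (Real.log (1 - q) - Real.log (1 - p)) α := by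
  rw [rpow_mul_eq hp0 hq0, rpow_mul_eq (by linarith) (by linarith)]
  rfl

lemma tilted_eq {p q : ℝ} (hp0 : 0 < p) (hp1 : p < 1) (hq0 : 0 < q) (hq1 : q < 1) (α : ℝ) :
    tiltedBern α p q =
      p * Real.exp (α * (Real.log q - Real.log p)) /
        gF p (1 - p) (Real.log q - Real.log p) (Real.log (1 - q) - Real.log (1 - p)) α := by
  unfold tiltedBern
  rw [E_eq_gF hp0 hp1 hq0 hq1, rpow_mul_eq hp0 hq0]

lemma one_sub_tilted {p q : ℝ} (hp0 : 0 < p) (hp1 : p < 1) (hq0 : 0 < q) (hq1 : q < 1) (α : ℝ) :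
    1 - tiltedBern α p q =
      (1 - p) * Real.exp (α * (Real.log (1 - q) - Real.log (1 - p))) /
        gF p (1 - p) (Real.log q - Real.log p) (Real.log (1 - q) - Real.log (1 - p)) α := by
  have hpos : 0 < gF p (1 - p) (Real.log q - Real.log p) (Real.log (1 - q) - Real.log (1 - p)) α := by
    exact add_pos (mul_pos hp0 (Real.exp_pos _)) (mul_pos (by linarith) (Real.exp_pos _))
  rw [tilted_eq hp0 hp1 hq0 hq1, eq_div_iff hpos.ne', sub_mul, div_mul_cancel₀ _ hpos.ne']
  unfold gF; ring

lemma gF_zero {P1 P2 u v : ℝ} : gF P1 P2 u v 0 = P1 + P2 := by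
  simp [gF]

lemma gF_one {p q : ℝ} (hp0 : 0 < p) (hp1 : p < 1) (hq0 : 0 < q) (hq1 : q < 1) :
    gF p (1 - p) (Real.log q - Real.log p) (Real.log (1 - q) - Real.log (1 - p)) 1 = 1 := by
  unfold gF
  rw [one_mul, one_mul, Real.exp_sub, Real.exp_sub, Real.exp_log hp0, Real.exp_log hq0,
    Real.exp_log (by linarith : (0:ℝ) < 1 - p), Real.exp_log (by linarith : (0:ℝ) < 1 - q)]
  have h : (1:ℝ) - p ≠ 0 := by linarith
  field_simp
  ring

lemma gF_le_one {p q : ℝ} (hp0 : 0 < p) (hp1 : p < 1) (hq0 : 0 < q) (hq1 : q < 1)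
    {α : ℝ} (hα0 : 0 ≤ α) (hα1 : α ≤ 1) :
    gF p (1 - p) (Real.log q - Real.log p) (Real.log (1 - q) - Real.log (1 - p)) α ≤ 1 := by
  rw [← E_eq_gF hp0 hp1 hq0 hq1]
  have h1 : p ^ (1 - α) * q ^ α ≤ (1 - α) * p + α * q :=
    Real.geom_mean_le_arith_mean2_weighted (by linarith) hα0 hp0.le hq0.le (by ring)
  have h2 : (1 - p) ^ (1 - α) * (1 - q) ^ α ≤ (1 - α) * (1 - p) + α * (1 - q) :=
    Real.geom_mean_le_arith_mean2_weighted (by linarith) hα0 (by linarith) (by linarith) (by ring)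
  linarith

lemma gH_nonneg {P1 P2 : ℝ} (h1 : 0 < P1) (h2 : 0 < P2) (u v α : ℝ) :
    0 ≤ gH P1 P2 u v α := by
  unfold gH
  have := Real.exp_pos (α * u)
  have := Real.exp_pos (α * v)
  positivity

lemma gH_compare {P1 P2 u v M α ξ : ℝ} (h1 : 0 < P1) (h2 : 0 < P2)
    (hu : |u| ≤ M) (hv : |v| ≤ M) (hd : |ξ - α| ≤ 1) :
    gH P1 P2 u v ξ ≤ Real.exp (4 * M) * gH P1 P2 u v α := by
  have hM : 0 ≤ M := le_trans (abs_nonneg u) hu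
  have keyu : Real.exp (ξ * u) = Real.exp (α * u) * Real.exp ((ξ - α) * u) := by
    rw [← Real.exp_add]; congr 1; ring
  have keyv : Real.exp (ξ * v) = Real.exp (α * v) * Real.exp ((ξ - α) * v) := by
    rw [← Real.exp_add]; congr 1; ring
  have hub : Real.exp ((ξ - α) * u) ≤ Real.exp M := by
    apply Real.exp_le_exp.2
    calc (ξ - α) * u ≤ |(ξ - α) * u| := le_abs_self _
    _ = |ξ - α| * |u| := abs_mul _ _
    _ ≤ 1 * M := mul_le_mul hd hu (abs_nonneg u) zero_le_one
    _ = M := one_mul M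
  have hvb : Real.exp ((ξ - α) * v) ≤ Real.exp M := by
    apply Real.exp_le_exp.2
    calc (ξ - α) * v ≤ |(ξ - α) * v| := le_abs_self _
    _ = |ξ - α| * |v| := abs_mul _ _
    _ ≤ 1 * M := mul_le_mul hd hv (abs_nonneg v) zero_le_one
    _ = M := one_mul M
  have hul : Real.exp (-M) ≤ Real.exp ((ξ - α) * u) := by
    apply Real.exp_le_exp.2
    have : -((ξ - α) * u) ≤ M := by
      calc -((ξ - α) * u) ≤ |(ξ - α) * u| := neg_le_abs _
      _ = |ξ - α| * |u| := abs_mul _ _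
      _ ≤ 1 * M := mul_le_mul hd hu (abs_nonneg u) zero_le_one
      _ = M := one_mul M
    linarith
  have hvl : Real.exp (-M) ≤ Real.exp ((ξ - α) * v) := by
    apply Real.exp_le_exp.2
    have : -((ξ - α) * v) ≤ M := by
      calc -((ξ - α) * v) ≤ |(ξ - α) * v| := neg_le_abs _
      _ = |ξ - α| * |v| := abs_mul _ _
      _ ≤ 1 * M := mul_le_mul hd hv (abs_nonneg v) zero_le_one
      _ = M := one_mul M
    linarith
  have hFα : 0 < gF P1 P2 u v α := gF_pos h1 h2 u v α
  have hFξ : 0 < gF P1 P2 u v ξ := gF_pos h1 h2 u v ξ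
  have hFlow : Real.exp (-M) * gF P1 P2 u v α ≤ gF P1 P2 u v ξ := by
    unfold gF
    rw [keyu, keyv]
    have e1 : 0 < Real.exp (α * u) := Real.exp_pos _
    have e2 : 0 < Real.exp (α * v) := Real.exp_pos _
    nlinarith [mul_le_mul_of_nonneg_left hul (by positivity : (0:ℝ) ≤ P1 * Real.exp (α * u)),
      mul_le_mul_of_nonneg_left hvl (by positivity : (0:ℝ) ≤ P2 * Real.exp (α * v))]
  unfold gH
  rw [← mul_div_assoc, div_le_div_iff₀ (by positivity) (by positivity)]
  have hNle : (u - v) ^ 2 * (P1 * Real.exp (ξ * u)) * (P2 * Real.exp (ξ * v)) ≤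
      Real.exp (2 * M) * ((u - v) ^ 2 * (P1 * Real.exp (α * u)) * (P2 * Real.exp (α * v))) := by
    rw [keyu, keyv]
    have e1 : 0 < Real.exp (α * u) := Real.exp_pos _
    have e2 : 0 < Real.exp (α * v) := Real.exp_pos _
    have h2M : Real.exp ((ξ - α) * u) * Real.exp ((ξ - α) * v) ≤ Real.exp (2 * M) := by
      calc Real.exp ((ξ - α) * u) * Real.exp ((ξ - α) * v) ≤ Real.exp M * Real.exp M :=
        mul_le_mul hub hvb (Real.exp_pos _).le (Real.exp_pos _).le
      _ = Real.exp (2 * M) := by rw [← Real.exp_add]; congr 1; ring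
    nlinarith [sq_nonneg (u - v), Real.exp_pos ((ξ - α) * u), Real.exp_pos ((ξ - α) * v),
      mul_le_mul_of_nonneg_left h2M
        (by positivity : (0:ℝ) ≤ (u - v) ^ 2 * (P1 * Real.exp (α * u)) * (P2 * Real.exp (α * v)))]
  have hFsq : (Real.exp (-M) * gF P1 P2 u v α) ^ 2 ≤ (gF P1 P2 u v ξ) ^ 2 := by
    apply pow_le_pow_left₀ (by positivity) hFlow
  calc (u - v) ^ 2 * (P1 * Real.exp (ξ * u)) * (P2 * Real.exp (ξ * v)) * gF P1 P2 u v α ^ 2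
      ≤ Real.exp (2 * M) * ((u - v) ^ 2 * (P1 * Real.exp (α * u)) * (P2 * Real.exp (α * v))) *
        gF P1 P2 u v α ^ 2 := by
        apply mul_le_mul_of_nonneg_right hNle (by positivity)
    _ = Real.exp (4 * M) * ((u - v) ^ 2 * (P1 * Real.exp (α * u)) * (P2 * Real.exp (α * v))) *
        (Real.exp (-M) * gF P1 P2 u v α) ^ 2 := by
        rw [mul_pow, ← Real.exp_nat_mul]
        rw [show Real.exp (2 * M) = Real.exp (4 * M) * Real.exp ((2:ℕ) * -M) by
          rw [← Real.exp_add]; norm_num; ring_nf]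
        ring
    _ ≤ Real.exp (4 * M) * ((u - v) ^ 2 * (P1 * Real.exp (α * u)) * (P2 * Real.exp (α * v))) *
        gF P1 P2 u v ξ ^ 2 := by
        apply mul_le_mul_of_nonneg_left hFsq
        have e1 : 0 < Real.exp (α * u) := Real.exp_pos _
        have e2 : 0 < Real.exp (α * v) := Real.exp_pos _
        positivity

lemma gH_le_bound {p q pstar ε α : ℝ} (hp0 : 0 < p) (hp1 : p < 1) (hq0 : 0 < q) (hq1 : q < 1)
    (hpp : p ≤ pstar) (hqp : q ≤ pstar) (hεp : 0 < ε) (hpe : pstar ≤ 1 - ε)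
    (hα0 : 0 ≤ α) (hα1 : α ≤ 1) :
    gH p (1 - p) (Real.log q - Real.log p) (Real.log (1 - q) - Real.log (1 - p)) α ≤
      ((Real.log q - Real.log p) - (Real.log (1 - q) - Real.log (1 - p))) ^ 2 * pstar / ε := by
  set u := Real.log q - Real.log p
  set v := Real.log (1 - q) - Real.log (1 - p)
  have hps0 : 0 < pstar := lt_of_lt_of_le hp0 hpp
  have hA : p * Real.exp (α * u) ≤ pstar := by
    rw [← rpow_mul_eq hp0 hq0]
    calc p ^ (1 - α) * q ^ α ≤ pstar ^ (1 - α) * pstar ^ α := by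
          apply mul_le_mul (Real.rpow_le_rpow hp0.le hpp (by linarith))
            (Real.rpow_le_rpow hq0.le hqp hα0) (Real.rpow_nonneg hq0.le α)
            (Real.rpow_nonneg hps0.le _)
      _ = pstar := by
          rw [← Real.rpow_add hps0]; norm_num
  have h1p : ε ≤ 1 - p := by linarith
  have h1q : ε ≤ 1 - q := by linarith
  have hB : ε ≤ (1 - p) * Real.exp (α * v) := by
    rw [← rpow_mul_eq (by linarith : (0:ℝ) < 1 - p) (by linarith : (0:ℝ) < 1 - q)]
    calc ε = ε ^ (1 - α) * ε ^ α := by rw [← Real.rpow_add hεp]; norm_num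
      _ ≤ (1 - p) ^ (1 - α) * (1 - q) ^ α := by
          apply mul_le_mul (Real.rpow_le_rpow hεp.le h1p (by linarith))
            (Real.rpow_le_rpow hεp.le h1q hα0) (Real.rpow_nonneg hεp.le α)
            (Real.rpow_nonneg (by linarith) _)
  have hA0 : 0 < p * Real.exp (α * u) := by positivity
  have hB0 : 0 < (1 - p) * Real.exp (α * v) := by
    exact mul_pos (by linarith) (Real.exp_pos _)
  have hF : gF p (1 - p) u v α = p * Real.exp (α * u) + (1 - p) * Real.exp (α * v) := rfl
  have hF0 : 0 < gF p (1 - p) u v α := by rw [hF]; positivity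
  have hFB : (1 - p) * Real.exp (α * v) ≤ gF p (1 - p) u v α := by rw [hF]; linarith
  have hFε : ε ≤ gF p (1 - p) u v α := le_trans hB hFB
  unfold gH
  rw [div_le_div_iff₀ (by positivity) hεp]
  have k2 : (1 - p) * Real.exp (α * v) * ε ≤ gF p (1 - p) u v α * gF p (1 - p) u v α :=
    mul_le_mul hFB hFε hεp.le hF0.le
  have k1 : p * Real.exp (α * u) * ((1 - p) * Real.exp (α * v) * ε) ≤
      pstar * ((1 - p) * Real.exp (α * v) * ε) :=
    mul_le_mul_of_nonneg_right hA (by positivity)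
  have k3 : pstar * ((1 - p) * Real.exp (α * v) * ε) ≤
      pstar * (gF p (1 - p) u v α * gF p (1 - p) u v α) :=
    mul_le_mul_of_nonneg_left k2 hps0.le
  nlinarith [sq_nonneg (u - v), k1, k3]

lemma t_eq {p q : ℝ} (hp0 : 0 < p) (hp1 : p < 1) (hq0 : 0 < q) (hq1 : q < 1) :
    Real.log ((p * (1 - q)) / (q * (1 - p))) =
      (Real.log (1 - q) - Real.log (1 - p)) - (Real.log q - Real.log p) := by
  rw [Real.log_div (mul_pos hp0 (by linarith : (0:ℝ) < 1 - q)).ne'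
      (mul_pos hq0 (by linarith : (0:ℝ) < 1 - p)).ne',
    Real.log_mul hp0.ne' (by linarith : (0:ℝ) < 1 - q).ne',
    Real.log_mul hq0.ne' (by linarith : (0:ℝ) < 1 - p).ne']
  ring

lemma gH_eq_tilt {p q α : ℝ} (hp0 : 0 < p) (hp1 : p < 1) (hq0 : 0 < q) (hq1 : q < 1) :
    (Real.log ((p * (1 - q)) / (q * (1 - p)))) ^ 2 * tiltedBern α p q * (1 - tiltedBern α p q) =
      gH p (1 - p) (Real.log q - Real.log p) (Real.log (1 - q) - Real.log (1 - p)) α := by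
  rw [t_eq hp0 hp1 hq0 hq1, one_sub_tilted hp0 hp1 hq0 hq1, tilted_eq hp0 hp1 hq0 hq1]
  have hF0 : 0 < gF p (1 - p) (Real.log q - Real.log p) (Real.log (1 - q) - Real.log (1 - p)) α :=
    gF_pos hp0 (by linarith) _ _ _
  unfold gH
  field_simp
  ring

set_option maxHeartbeats 1000000 in
/-- **Lower bound on `√n σ̄ₙ α*(1−α*)`** (Lemma 11). -/
theorem stmt_18 (β ε ω : ℝ) (Kstar : ℕ)
    (hβ : 1 < β) (hε : ε ∈ Set.Ioo (0 : ℝ) 1) (hω : 1 < ω)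
    (C₁ : ℝ) (hC₁ : 0 < C₁) :
    ∃ C₂ : ℝ, 0 < C₂ ∧
    ∀ (n K : ℕ) (z : Fin n → Fin K) (P : Fin K → Fin K → ℝ) (pstar : ℝ)
      (k ℓ : Fin K) (αs σbar : ℝ),
      0 < n → 0 < K → K ≤ Kstar →
      (∀ a b, P a b = P b a) →
      (∀ a b, 0 < P a b) →
      IsGreatest (Set.range fun ab : Fin K × Fin K => P ab.1 ab.2) pstar →
      pstar ≤ 1 - ε →
      (∀ a b a' b', P a b ≤ ω * P a' b') →
      (∀ c' : Fin K,
        (n : ℝ) / (β * K) ≤ ((Finset.univ.filter fun i => z i = c').card : ℝ) ∧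
        ((Finset.univ.filter fun i => z i = c').card : ℝ) ≤ β * n / K) →
      k ≠ ℓ →
      -- `α*` maximizes the Chernoff α-divergence over (0,1)
      αs ∈ Set.Ioo (0 : ℝ) 1 →
      IsMaxOn (fun α : ℝ => ∑ j, -Real.log
          ((P k (z j)) ^ (1 - α) * (P ℓ (z j)) ^ α +
            (1 - P k (z j)) ^ (1 - α) * (1 - P ℓ (z j)) ^ α)) (Set.Ioo 0 1) αs →
      -- `n σ̄ₙ² = ∑_j [log(p_{kj}(1−p_{ℓj})/(p_{ℓj}(1−p_{kj})))]² p_{α*j}(1−p_{α*j})`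
      σbar = Real.sqrt ((1 / (n : ℝ)) * ∑ j,
          (Real.log ((P k (z j) * (1 - P ℓ (z j))) / (P ℓ (z j) * (1 - P k (z j))))) ^ 2 *
            tiltedBern αs (P k (z j)) (P ℓ (z j)) *
            (1 - tiltedBern αs (P k (z j)) (P ℓ (z j)))) →
      (n : ℝ) * pstar ≤
          C₂ * (chernoffBern (fun j => P k (z j)) (fun j => P ℓ (z j))) ^ 2 →
      C₁ ≤ Real.sqrt (n : ℝ) * σbar * αs * (1 - αs) := by
  obtain ⟨hε0, hε1⟩ := hε
  set M0 : ℝ := Real.log ω - Real.log ε with hM0def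
  have hlogω : 0 < Real.log ω := Real.log_pos hω
  have hlogε : Real.log ε < 0 := Real.log_neg hε0 hε1
  have hM0 : 0 < M0 := by rw [hM0def]; linarith
  set C : ℝ := Real.exp (4 * M0) with hCdef
  have hC : 0 < C := Real.exp_pos _
  refine ⟨ε / (2 * M0 * C * C₁) ^ 2, by positivity, ?_⟩
  intro n K z P pstar k ℓ αs σbar hn hK hKs hsym hPpos hgr hpse hωle hbal hkl hαs hmax hσ hnp
  set C₂ : ℝ := ε / (2 * M0 * C * C₁) ^ 2 with hC₂def
  have hC₂ : 0 < C₂ := by positivity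
  obtain ⟨hαs0, hαs1⟩ := hαs
  have hn0 : (n : ℝ) ≠ 0 := Nat.cast_ne_zero.2 hn.ne'
  -- basic bounds on the parameters
  have hple : ∀ a b, P a b ≤ pstar := fun a b => hgr.2 ⟨(a, b), rfl⟩
  have hps0 : 0 < pstar := by
    obtain ⟨x, hx⟩ := hgr.1
    exact hx ▸ hPpos x.1 x.2
  have hps1 : pstar < 1 := by linarith
  have hp0 : ∀ j, 0 < P k (z j) := fun j => hPpos _ _
  have hq0 : ∀ j, 0 < P ℓ (z j) := fun j => hPpos _ _
  have hp1 : ∀ j, P k (z j) < 1 := fun j => lt_of_le_of_lt (hple k (z j)) hps1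
  have hq1 : ∀ j, P ℓ (z j) < 1 := fun j => lt_of_le_of_lt (hple ℓ (z j)) hps1
  have hp2 : ∀ j, 0 < 1 - P k (z j) := fun j => by linarith [hp1 j]
  have hu : ∀ j, |Real.log (P ℓ (z j)) - Real.log (P k (z j))| ≤ M0 := by
    intro j
    have h1 : P ℓ (z j) ≤ ω * P k (z j) := hωle ℓ (z j) k (z j)
    have h2 : P k (z j) ≤ ω * P ℓ (z j) := hωle k (z j) ℓ (z j)
    have l1 : Real.log (P ℓ (z j)) ≤ Real.log ω + Real.log (P k (z j)) := by
      calc Real.log (P ℓ (z j)) ≤ Real.log (ω * P k (z j)) := Real.log_le_log (hq0 j) h1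
        _ = Real.log ω + Real.log (P k (z j)) := Real.log_mul (by linarith) (hp0 j).ne'
    have l2 : Real.log (P k (z j)) ≤ Real.log ω + Real.log (P ℓ (z j)) := by
      calc Real.log (P k (z j)) ≤ Real.log (ω * P ℓ (z j)) := Real.log_le_log (hp0 j) h2
        _ = Real.log ω + Real.log (P ℓ (z j)) := Real.log_mul (by linarith) (hq0 j).ne'
    rw [abs_le, hM0def]
    constructor <;> linarith
  have hv : ∀ j, |Real.log (1 - P ℓ (z j)) - Real.log (1 - P k (z j))| ≤ M0 := by
    intro j
    have e1 : ε ≤ 1 - P k (z j) := by linarith [hple k (z j)]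
    have e2 : ε ≤ 1 - P ℓ (z j) := by linarith [hple ℓ (z j)]
    have l1 : Real.log ε ≤ Real.log (1 - P k (z j)) := Real.log_le_log hε0 e1
    have l2 : Real.log ε ≤ Real.log (1 - P ℓ (z j)) := Real.log_le_log hε0 e2
    have l3 : Real.log (1 - P k (z j)) ≤ 0 := Real.log_nonpos (by linarith [e1]) (by linarith [hp0 j])
    have l4 : Real.log (1 - P ℓ (z j)) ≤ 0 := Real.log_nonpos (by linarith [e2]) (by linarith [hq0 j])
    rw [abs_le, hM0def]
    constructor <;> linarith
  -- the divergence function and its derivatives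
  set Df : ℝ → ℝ := fun α => ∑ j, -Real.log (gF (P k (z j)) (1 - P k (z j))
    (Real.log (P ℓ (z j)) - Real.log (P k (z j)))
    (Real.log (1 - P ℓ (z j)) - Real.log (1 - P k (z j))) α) with hDfdef
  set Dd : ℝ → ℝ := fun α => ∑ j, -gD (P k (z j)) (1 - P k (z j))
    (Real.log (P ℓ (z j)) - Real.log (P k (z j)))
    (Real.log (1 - P ℓ (z j)) - Real.log (1 - P k (z j))) α with hDddef
  set DH : ℝ → ℝ := fun α => ∑ j, gH (P k (z j)) (1 - P k (z j))
    (Real.log (P ℓ (z j)) - Real.log (P k (z j)))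
    (Real.log (1 - P ℓ (z j)) - Real.log (1 - P k (z j))) α with hDHdef
  have hDf : ∀ α, HasDerivAt Df (Dd α) α := by
    intro α
    exact HasDerivAt.fun_sum fun j _ => (hasDerivAt_log_gF (hp0 j) (hp2 j) _ _ α).neg
  have hDd : ∀ α, HasDerivAt Dd (-(DH α)) α := by
    intro α
    have h := HasDerivAt.fun_sum fun (j : Fin n) (_ : j ∈ Finset.univ) =>
      (hasDerivAt_gD (hp0 j) (hp2 j)
        (Real.log (P ℓ (z j)) - Real.log (P k (z j)))
        (Real.log (1 - P ℓ (z j)) - Real.log (1 - P k (z j))) α).neg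
    have h2 : (∑ j, -gH (P k (z j)) (1 - P k (z j))
        (Real.log (P ℓ (z j)) - Real.log (P k (z j)))
        (Real.log (1 - P ℓ (z j)) - Real.log (1 - P k (z j))) α) = -(DH α) := by
      rw [hDHdef]; exact Finset.sum_neg_distrib _
    exact h2 ▸ h
  have hDH0 : ∀ α, 0 ≤ DH α :=
    fun α => Finset.sum_nonneg fun j _ => gH_nonneg (hp0 j) (hp2 j) _ _ _
  -- identification of the statement's function with Df
  have hfeq : (fun α : ℝ => ∑ j, -Real.log
      ((P k (z j)) ^ (1 - α) * (P ℓ (z j)) ^ α +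
        (1 - P k (z j)) ^ (1 - α) * (1 - P ℓ (z j)) ^ α)) = Df := by
    funext α
    exact Finset.sum_congr rfl fun j _ => by
      rw [E_eq_gF (hp0 j) (hp1 j) (hq0 j) (hq1 j)]
  have hmaxDf : IsMaxOn Df (Set.Ioo 0 1) αs := hfeq ▸ hmax
  set Dstar : ℝ := Df αs with hDstardef
  have hCB : chernoffBern (fun j => P k (z j)) (fun j => P ℓ (z j)) = Dstar := by
    unfold chernoffBern
    rw [show ((fun α : ℝ => ∑ j, -Real.log
        ((P k (z j)) ^ (1 - α) * (P ℓ (z j)) ^ α +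
          (1 - P k (z j)) ^ (1 - α) * (1 - P ℓ (z j)) ^ α)) '' Set.Ioo 0 1) =
        Df '' Set.Ioo 0 1 from by rw [hfeq]]
    exact IsGreatest.csSup_eq ⟨Set.mem_image_of_mem _ ⟨hαs0, hαs1⟩,
      fun y ⟨x, hx, hxy⟩ => hxy ▸ hmaxDf hx⟩
  rw [hCB] at hnp
  -- positivity of Dstar
  have hDnn : 0 ≤ Dstar :=
    Finset.sum_nonneg fun j _ => by
      rw [neg_nonneg]
      exact Real.log_nonpos (gF_pos (hp0 j) (hp2 j) _ _ _).le
        (gF_le_one (hp0 j) (hp1 j) (hq0 j) (hq1 j) hαs0.le hαs1.le)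
  have hnps : 0 < (n : ℝ) * pstar := mul_pos (by exact_mod_cast hn) hps0
  have hDpos : 0 < Dstar := by
    rcases lt_or_eq_of_le hDnn with h | h
    · exact h
    · exfalso
      rw [← h] at hnp
      simp only [ne_eq, OfNat.ofNat_ne_zero, not_false_eq_true, zero_pow, mul_zero] at hnp
      nlinarith
  -- endpoint values
  have hDf1 : Df 1 = 0 :=
    Finset.sum_eq_zero fun j _ => by
      rw [gF_one (hp0 j) (hp1 j) (hq0 j) (hq1 j), Real.log_one, neg_zero]
  have hDf0 : Df 0 = 0 :=
    Finset.sum_eq_zero fun j _ => by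
      rw [gF_zero, show P k (z j) + (1 - P k (z j)) = 1 by ring, Real.log_one, neg_zero]
  -- second derivative comparison
  set S : ℝ := DH αs with hSdef
  have hS0 : 0 ≤ S := hDH0 αs
  have hCS0 : 0 ≤ C * S := mul_nonneg hC.le hS0
  have hcmp : ∀ ξ ∈ Set.Ioo (0:ℝ) 1, DH ξ ≤ C * S := by
    intro ξ hξ
    have hstep : ∀ j ∈ Finset.univ, gH (P k (z j)) (1 - P k (z j))
        (Real.log (P ℓ (z j)) - Real.log (P k (z j)))
        (Real.log (1 - P ℓ (z j)) - Real.log (1 - P k (z j))) ξ ≤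
        Real.exp (4 * M0) * gH (P k (z j)) (1 - P k (z j))
        (Real.log (P ℓ (z j)) - Real.log (P k (z j)))
        (Real.log (1 - P ℓ (z j)) - Real.log (1 - P k (z j))) αs := fun j _ =>
      gH_compare (hp0 j) (hp2 j) (hu j) (hv j)
        (by rw [abs_le]; constructor <;> [linarith [hξ.1]; linarith [hξ.2]])
    have h2 := Finset.sum_le_sum hstep
    rw [← Finset.mul_sum] at h2
    exact h2
  -- MVT
  have hcont : ∀ a b : ℝ, ContinuousOn Df (Set.Icc a b) :=
    fun a b x _ => (hDf x).continuousAt.continuousWithinAt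
  have hcont' : ∀ a b : ℝ, ContinuousOn Dd (Set.Icc a b) :=
    fun a b x _ => (hDd x).continuousAt.continuousWithinAt
  have hcrit : Dd αs = 0 :=
    (hmaxDf.isLocalMax (Ioo_mem_nhds hαs0 hαs1)).hasDerivAt_eq_zero (hDf αs)
  have h1α : (0:ℝ) < 1 - αs := by linarith
  have hRight : Dstar ≤ C * S * (1 - αs) ^ 2 := by
    obtain ⟨η, hη, hs1⟩ := exists_hasDerivAt_eq_slope Df Dd hαs1 (hcont αs 1)
      (fun x _ => hDf x)
    obtain ⟨ξ, hξ, hs2⟩ := exists_hasDerivAt_eq_slope Dd (fun x => -(DH x)) hη.1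
      (hcont' αs η) (fun x _ => hDd x)
    rw [hDf1] at hs1
    rw [hcrit] at hs2
    have hηα : 0 < η - αs := by linarith [hη.1]
    have e1 : Dd η * (1 - αs) = -Dstar := by
      rw [hs1, div_mul_cancel₀ _ (ne_of_gt h1α), hDstardef, zero_sub]
    have e2 : -(DH ξ) * (η - αs) = Dd η := by
      rw [hs2, div_mul_cancel₀ _ (ne_of_gt hηα), sub_zero]
    have e3 : DH ξ * (η - αs) * (1 - αs) = Dstar := by linear_combination (-(1 - αs)) * e2 - e1
    have hξ01 : ξ ∈ Set.Ioo (0:ℝ) 1 := ⟨by linarith [hξ.1], by linarith [hξ.2, hη.2]⟩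
    have hc := hcmp ξ hξ01
    have k1 : DH ξ * (η - αs) ≤ C * S * (η - αs) := mul_le_mul_of_nonneg_right hc hηα.le
    have k2 : C * S * (η - αs) ≤ C * S * (1 - αs) :=
      mul_le_mul_of_nonneg_left (by linarith [hη.2]) hCS0
    calc Dstar = DH ξ * (η - αs) * (1 - αs) := e3.symm
      _ ≤ C * S * (1 - αs) * (1 - αs) := mul_le_mul_of_nonneg_right (k1.trans k2) h1α.le
      _ = C * S * (1 - αs) ^ 2 := by ring
  have hLeft : Dstar ≤ C * S * αs ^ 2 := by
    obtain ⟨η, hη, hs1⟩ := exists_hasDerivAt_eq_slope Df Dd hαs0 (hcont 0 αs)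
      (fun x _ => hDf x)
    obtain ⟨ξ, hξ, hs2⟩ := exists_hasDerivAt_eq_slope Dd (fun x => -(DH x)) hη.2
      (hcont' η αs) (fun x _ => hDd x)
    rw [hDf0] at hs1
    rw [hcrit] at hs2
    have hηα : 0 < αs - η := by linarith [hη.2]
    have e1 : Dd η * αs = Dstar := by
      rw [hs1, sub_zero, sub_zero, div_mul_cancel₀ _ (ne_of_gt hαs0), hDstardef]
    have e2 : -(DH ξ) * (αs - η) = -(Dd η) := by
      rw [hs2, div_mul_cancel₀ _ (ne_of_gt hηα), zero_sub]
    have e3 : DH ξ * (αs - η) * αs = Dstar := by linear_combination (-αs) * e2 + e1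
    have hξ01 : ξ ∈ Set.Ioo (0:ℝ) 1 := ⟨by linarith [hξ.1, hη.1], by linarith [hξ.2]⟩
    have hc := hcmp ξ hξ01
    have k1 : DH ξ * (αs - η) ≤ C * S * (αs - η) := mul_le_mul_of_nonneg_right hc hηα.le
    have k2 : C * S * (αs - η) ≤ C * S * αs :=
      mul_le_mul_of_nonneg_left (by linarith [hη.1]) hCS0
    calc Dstar = DH ξ * (αs - η) * αs := e3.symm
      _ ≤ C * S * αs * αs := mul_le_mul_of_nonneg_right (k1.trans k2) hαs0.le
      _ = C * S * αs ^ 2 := by ring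
  -- combine
  have ha0 : 0 < αs * (1 - αs) := mul_pos hαs0 h1α
  have hkey : Dstar ≤ C * S * (αs * (1 - αs)) := by
    have hprod : Dstar * Dstar ≤ (C * S * (1 - αs) ^ 2) * (C * S * αs ^ 2) :=
      mul_le_mul hRight hLeft hDpos.le (hDpos.le.trans hRight)
    by_contra hcon
    push_neg at hcon
    have hB0 : 0 ≤ C * S * (αs * (1 - αs)) := mul_nonneg hCS0 ha0.le
    have hlt : (C * S * (αs * (1 - αs))) * (C * S * (αs * (1 - αs))) < Dstar * Dstar :=
      mul_self_lt_mul_self hB0 hcon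
    nlinarith [hprod, hlt]
  -- bound on S
  have hSb : S ≤ (n : ℝ) * ((2 * M0) ^ 2 * pstar / ε) := by
    have hterm : ∀ j ∈ Finset.univ, gH (P k (z j)) (1 - P k (z j))
        (Real.log (P ℓ (z j)) - Real.log (P k (z j)))
        (Real.log (1 - P ℓ (z j)) - Real.log (1 - P k (z j))) αs ≤
        (2 * M0) ^ 2 * pstar / ε := by
      intro j _
      refine le_trans (gH_le_bound (hp0 j) (hp1 j) (hq0 j) (hq1 j)
        (hple k (z j)) (hple ℓ (z j)) hε0 hpse hαs0.le hαs1.le) ?_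
      have h1 := abs_le.1 (hu j)
      have h2 := abs_le.1 (hv j)
      have ht : ((Real.log (P ℓ (z j)) - Real.log (P k (z j))) -
          (Real.log (1 - P ℓ (z j)) - Real.log (1 - P k (z j)))) ^ 2 ≤ (2 * M0) ^ 2 := by
        nlinarith [h1.1, h1.2, h2.1, h2.2]
      gcongr
    calc S ≤ ∑ _j : Fin n, (2 * M0) ^ 2 * pstar / ε := Finset.sum_le_sum hterm
      _ = (n : ℝ) * ((2 * M0) ^ 2 * pstar / ε) := by
          rw [Finset.sum_const, Finset.card_univ, Fintype.card_fin, nsmul_eq_mul]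
  -- relate σbar to S
  have hTS : (∑ j, (Real.log ((P k (z j) * (1 - P ℓ (z j))) / (P ℓ (z j) * (1 - P k (z j))))) ^ 2 *
      tiltedBern αs (P k (z j)) (P ℓ (z j)) *
      (1 - tiltedBern αs (P k (z j)) (P ℓ (z j)))) = S :=
    Finset.sum_congr rfl fun j _ => gH_eq_tilt (hp0 j) (hp1 j) (hq0 j) (hq1 j)
  have hnσ : Real.sqrt (n : ℝ) * σbar = Real.sqrt S := by
    rw [hσ, hTS, ← Real.sqrt_mul (Nat.cast_nonneg n)]
    congr 1
    field_simp
  -- final computation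
  have hSpos : 0 < S := by nlinarith [hkey, hDpos, ha0, hC]
  have hKD : S ≤ ((2 * M0) ^ 2 * C₂ / ε) * Dstar ^ 2 := by
    calc S ≤ (n : ℝ) * ((2 * M0) ^ 2 * pstar / ε) := hSb
      _ = (2 * M0) ^ 2 / ε * ((n : ℝ) * pstar) := by ring
      _ ≤ (2 * M0) ^ 2 / ε * (C₂ * Dstar ^ 2) := by
          apply mul_le_mul_of_nonneg_left hnp (by positivity)
      _ = ((2 * M0) ^ 2 * C₂ / ε) * Dstar ^ 2 := by ring
  have hsq : C₁ ^ 2 ≤ S * (αs * (1 - αs)) ^ 2 := by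
    have hDsq : Dstar ^ 2 ≤ C ^ 2 * S ^ 2 * (αs * (1 - αs)) ^ 2 := by
      have h := mul_le_mul hkey hkey hDpos.le (hDpos.le.trans hkey)
      calc Dstar ^ 2 = Dstar * Dstar := by ring
        _ ≤ (C * S * (αs * (1 - αs))) * (C * S * (αs * (1 - αs))) := h
        _ = C ^ 2 * S ^ 2 * (αs * (1 - αs)) ^ 2 := by ring
    have hid : C₁ ^ 2 * (C ^ 2 * ((2 * M0) ^ 2 * C₂ / ε)) = 1 := by
      rw [hC₂def]
      field_simp
    have hstep : Dstar ^ 2 ≤ C ^ 2 * ((2 * M0) ^ 2 * C₂ / ε) * (S * (αs * (1 - αs)) ^ 2) *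
        Dstar ^ 2 := by
      calc Dstar ^ 2 ≤ C ^ 2 * S ^ 2 * (αs * (1 - αs)) ^ 2 := hDsq
        _ = C ^ 2 * S * (αs * (1 - αs)) ^ 2 * S := by ring
        _ ≤ C ^ 2 * S * (αs * (1 - αs)) ^ 2 * (((2 * M0) ^ 2 * C₂ / ε) * Dstar ^ 2) :=
            mul_le_mul_of_nonneg_left hKD (by positivity)
        _ = C ^ 2 * ((2 * M0) ^ 2 * C₂ / ε) * (S * (αs * (1 - αs)) ^ 2) * Dstar ^ 2 := by ring
    have hD2 : 0 < Dstar ^ 2 := by positivity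
    have h1 : 1 ≤ C ^ 2 * ((2 * M0) ^ 2 * C₂ / ε) * (S * (αs * (1 - αs)) ^ 2) := by
      have h' : 1 * Dstar ^ 2 ≤ (C ^ 2 * ((2 * M0) ^ 2 * C₂ / ε) *
          (S * (αs * (1 - αs)) ^ 2)) * Dstar ^ 2 := by linarith [hstep]
      exact le_of_mul_le_mul_right h' hD2
    have h2 : C₁ ^ 2 * 1 ≤ C₁ ^ 2 * (C ^ 2 * ((2 * M0) ^ 2 * C₂ / ε) *
        (S * (αs * (1 - αs)) ^ 2)) := by
      apply mul_le_mul_of_nonneg_left h1 (sq_nonneg C₁)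
    calc C₁ ^ 2 = C₁ ^ 2 * 1 := by ring
      _ ≤ C₁ ^ 2 * (C ^ 2 * ((2 * M0) ^ 2 * C₂ / ε) * (S * (αs * (1 - αs)) ^ 2)) := h2
      _ = (C₁ ^ 2 * (C ^ 2 * ((2 * M0) ^ 2 * C₂ / ε))) * (S * (αs * (1 - αs)) ^ 2) := by ring
      _ = 1 * (S * (αs * (1 - αs)) ^ 2) := by rw [hid]
      _ = S * (αs * (1 - αs)) ^ 2 := one_mul _
  -- conclude
  have hBa : C₁ ≤ Real.sqrt S * (αs * (1 - αs)) := by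
    calc C₁ = Real.sqrt (C₁ ^ 2) := (Real.sqrt_sq hC₁.le).symm
      _ ≤ Real.sqrt (S * (αs * (1 - αs)) ^ 2) := Real.sqrt_le_sqrt hsq
      _ = Real.sqrt S * (αs * (1 - αs)) := by
          rw [Real.sqrt_mul hSpos.le, Real.sqrt_sq ha0.le]
  calc C₁ ≤ Real.sqrt S * (αs * (1 - αs)) := hBa
    _ = Real.sqrt (n : ℝ) * σbar * αs * (1 - αs) := by rw [← hnσ]; ring
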